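/- arXiv:1909.02682 — 4 statements merged into one kernel-verified Lean document; each statement's English description precedes it below -/
import Mathlib

section
/- Let (η_k) satisfy 0 ≤ η_k ≤ 1 and ∑_k η_k = ∞, and let (u_k) be a sequence in a normed space with ‖u_k‖ ≤ G for all k. Define δ_{k+1} = (1 - η_k) δ_k - η_k λ u_k with λ ≥ 0 and arbitrary initial δ_0. Then limsup_{k→∞} ‖δ_k‖ ≤ λ G. -/
theorem stmt_3 {E : Type*} [NormedAddCommGroup E] [NormedSpace ℝ E]
    (η : ℕ → ℝ) (hη : ∀ k, 0 ≤ η k ∧ η k ≤ 1)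
    (hdiv : Filter.Tendsto (fun n => ∑ k ∈ Finset.range n, η k) Filter.atTop Filter.atTop)
    (u : ℕ → E) (G : ℝ) (hu : ∀ k, ‖u k‖ ≤ G)
    (lam : ℝ) (hlam : 0 ≤ lam) (δ : ℕ → E)
    (hrec : ∀ k, δ (k + 1) = (1 - η k) • δ k - (η k * lam) • u k) :
    Filter.limsup (fun k => ‖δ k‖) Filter.atTop ≤ lam * G := by
  have hG : 0 ≤ G := le_trans (norm_nonneg _) (hu 0)
  set b : ℕ → ℝ := fun k => max (‖δ k‖ - lam * G) 0 with hb
  have hbn : ∀ k, 0 ≤ b k := fun k => le_max_right _ _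
  have hstep : ∀ k, b (k + 1) ≤ (1 - η k) * b k := by
    intro k
    have h1 : 0 ≤ 1 - η k := by linarith [(hη k).2]
    have h0 : 0 ≤ η k := (hη k).1
    have hn : ‖δ (k + 1)‖ ≤ (1 - η k) * ‖δ k‖ + (η k * lam) * G := by
      rw [hrec k]
      calc ‖(1 - η k) • δ k - (η k * lam) • u k‖
          ≤ ‖(1 - η k) • δ k‖ + ‖(η k * lam) • u k‖ := norm_sub_le _ _
        _ = (1 - η k) * ‖δ k‖ + (η k * lam) * ‖u k‖ := by
            rw [norm_smul, norm_smul, Real.norm_of_nonneg h1,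
              Real.norm_of_nonneg (by positivity)]
        _ ≤ (1 - η k) * ‖δ k‖ + (η k * lam) * G := by
            have := hu k
            nlinarith [mul_nonneg h0 hlam]
    apply max_le
    · have h2 : ‖δ k‖ - lam * G ≤ b k := le_max_left _ _
      nlinarith [hbn k]
    · exact mul_nonneg h1 (hbn k)
  have hbound : ∀ n, b n ≤ b 0 * Real.exp (-(∑ k ∈ Finset.range n, η k)) := by
    intro n
    induction n with
    | zero => simp
    | succ n ih =>
      have h1 : 0 ≤ 1 - η n := by linarith [(hη n).2]
      have hexp : (1 - η n) ≤ Real.exp (-(η n)) := by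
        have := Real.add_one_le_exp (-(η n)); linarith
      calc b (n + 1) ≤ (1 - η n) * b n := hstep n
        _ ≤ Real.exp (-(η n)) * b n := mul_le_mul_of_nonneg_right hexp (hbn n)
        _ ≤ Real.exp (-(η n)) * (b 0 * Real.exp (-(∑ k ∈ Finset.range n, η k))) :=
            mul_le_mul_of_nonneg_left ih (Real.exp_pos _).le
        _ = b 0 * Real.exp (-(∑ k ∈ Finset.range (n + 1), η k)) := by
            rw [Finset.sum_range_succ, neg_add, Real.exp_add]; ring
  have htend : Filter.Tendsto b Filter.atTop (nhds 0) := by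
    have h1 : Filter.Tendsto
        (fun n => b 0 * Real.exp (-(∑ k ∈ Finset.range n, η k)))
        Filter.atTop (nhds 0) := by
      have h2 : Filter.Tendsto (fun n => -(∑ k ∈ Finset.range n, η k))
          Filter.atTop Filter.atBot := Filter.tendsto_neg_atTop_atBot.comp hdiv
      have h3 := Real.tendsto_exp_atBot.comp h2
      simpa using h3.const_mul (b 0)
    exact tendsto_of_tendsto_of_tendsto_of_le_of_le tendsto_const_nhds h1 hbn hbound
  have hle : ∀ k, ‖δ k‖ ≤ lam * G + b k := by
    intro k
    have := le_max_left (‖δ k‖ - lam * G) 0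
    simp only [hb]; linarith
  have hlim : Filter.Tendsto (fun k => lam * G + b k) Filter.atTop (nhds (lam * G)) := by
    simpa using tendsto_const_nhds.add htend
  calc Filter.limsup (fun k => ‖δ k‖) Filter.atTop
      ≤ Filter.limsup (fun k => lam * G + b k) Filter.atTop := by
        exact Filter.limsup_le_limsup (Filter.Eventually.of_forall hle)
          (Filter.isCoboundedUnder_le_of_le _ fun k => norm_nonneg (δ k))
          hlim.isBoundedUnder_le
    _ = lam * G := hlim.limsup_eq
end

section
/- Let T be a γ-contraction on ℝ^n with 0 ≤ γ < 1 (in the sup norm), with fixed point q*. Let (η_k) satisfy 0 ≤ η_k ≤ 1 and ∑_k η_k = ∞. Define q_{k+1} = q_k + η_k (T q_k - q_k). Then q_k → q* as k → ∞. -/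
theorem stmt_7 (n : ℕ) (γ : ℝ) (hγ0 : 0 ≤ γ) (hγ1 : γ < 1)
    (T : (Fin n → ℝ) → (Fin n → ℝ))
    (hcontr : ∀ q₁ q₂, ‖T q₁ - T q₂‖ ≤ γ * ‖q₁ - q₂‖)
    (qstar : Fin n → ℝ) (hfix : T qstar = qstar)
    (η : ℕ → ℝ) (hη : ∀ k, 0 ≤ η k ∧ η k ≤ 1)
    (hdiv : Filter.Tendsto (fun m => ∑ k ∈ Finset.range m, η k) Filter.atTop Filter.atTop)
    (q : ℕ → Fin n → ℝ)
    (hrec : ∀ k, q (k + 1) = q k + η k • (T (q k) - q k)) :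
    Filter.Tendsto q Filter.atTop (nhds qstar) := by
  have hstep : ∀ k, ‖q (k+1) - qstar‖ ≤ (1 - η k * (1 - γ)) * ‖q k - qstar‖ := by
    intro k
    have hsplit : q (k+1) - qstar
        = (1 - η k) • (q k - qstar) + η k • (T (q k) - T qstar) := by
      rw [hrec, hfix]; module
    calc ‖q (k+1) - qstar‖
        = ‖(1 - η k) • (q k - qstar) + η k • (T (q k) - T qstar)‖ := by rw [hsplit]
      _ ≤ ‖(1 - η k) • (q k - qstar)‖ + ‖η k • (T (q k) - T qstar)‖ := norm_add_le _ _
      _ ≤ (1 - η k) * ‖q k - qstar‖ + η k * (γ * ‖q k - qstar‖) := by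
          rw [norm_smul, norm_smul, Real.norm_eq_abs, Real.norm_eq_abs,
            abs_of_nonneg (by linarith [(hη k).2]), abs_of_nonneg (hη k).1]
          have := mul_le_mul_of_nonneg_left (hcontr (q k) qstar) (hη k).1
          linarith
      _ = (1 - η k * (1 - γ)) * ‖q k - qstar‖ := by ring
  have hexp : ∀ k, ‖q (k+1) - qstar‖ ≤ Real.exp (-(η k * (1 - γ))) * ‖q k - qstar‖ := by
    intro k
    have h1 : (1 - η k * (1 - γ)) ≤ Real.exp (-(η k * (1 - γ))) := by
      have := Real.add_one_le_exp (-(η k * (1 - γ))); linarith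
    exact (hstep k).trans (mul_le_mul_of_nonneg_right h1 (norm_nonneg _))
  have hbound : ∀ m, ‖q m - qstar‖
      ≤ Real.exp (-((1 - γ) * ∑ k ∈ Finset.range m, η k)) * ‖q 0 - qstar‖ := by
    intro m
    induction m with
    | zero => simp
    | succ m ih =>
      calc ‖q (m+1) - qstar‖ ≤ Real.exp (-(η m * (1 - γ))) * ‖q m - qstar‖ := hexp m
        _ ≤ Real.exp (-(η m * (1 - γ))) *
            (Real.exp (-((1 - γ) * ∑ k ∈ Finset.range m, η k)) * ‖q 0 - qstar‖) :=
          mul_le_mul_of_nonneg_left ih (Real.exp_pos _).le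
        _ = Real.exp (-((1 - γ) * ∑ k ∈ Finset.range (m+1), η k)) * ‖q 0 - qstar‖ := by
          rw [← mul_assoc, ← Real.exp_add, Finset.sum_range_succ]
          congr 2
          ring
  have h1 : Filter.Tendsto (fun m => (1 - γ) * ∑ k ∈ Finset.range m, η k)
      Filter.atTop Filter.atTop := hdiv.const_mul_atTop (by linarith)
  have h2 : Filter.Tendsto (fun m => -((1 - γ) * ∑ k ∈ Finset.range m, η k))
      Filter.atTop Filter.atBot := Filter.tendsto_neg_atBot_iff.mpr h1
  have h3 : Filter.Tendsto
      (fun m => Real.exp (-((1 - γ) * ∑ k ∈ Finset.range m, η k)) * ‖q 0 - qstar‖)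
      Filter.atTop (nhds 0) := by
    have := (Real.tendsto_exp_atBot.comp h2).mul_const ‖q 0 - qstar‖
    simpa using this
  rw [tendsto_iff_norm_sub_tendsto_zero]
  exact squeeze_zero (fun m => norm_nonneg _) hbound h3
end

section
/- Let T be a γ-contraction on ℝ^n with fixed point q*, 0 ≤ γ < 1, and let (η_k) satisfy 0 ≤ η_k ≤ 1 and ∑_k η_k = ∞. Let (u_k) be vectors with ‖u_k‖_∞ ≤ B. Define q_{k+1} = q_k + η_k (T q_k - q_k - u_k). Then limsup_{k→∞} ‖q_k - q*‖_∞ ≤ B / (1 - γ). -/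
theorem stmt_8 (n : ℕ) (γ : ℝ) (hγ0 : 0 ≤ γ) (hγ1 : γ < 1)
    (T : (Fin n → ℝ) → (Fin n → ℝ))
    (hcontr : ∀ q₁ q₂, ‖T q₁ - T q₂‖ ≤ γ * ‖q₁ - q₂‖)
    (qstar : Fin n → ℝ) (hfix : T qstar = qstar)
    (η : ℕ → ℝ) (hη : ∀ k, 0 ≤ η k ∧ η k ≤ 1)
    (hdiv : Filter.Tendsto (fun m => ∑ k ∈ Finset.range m, η k) Filter.atTop Filter.atTop)
    (u : ℕ → Fin n → ℝ) (B : ℝ) (hu : ∀ k, ‖u k‖ ≤ B)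
    (q : ℕ → Fin n → ℝ)
    (hrec : ∀ k, q (k + 1) = q k + η k • (T (q k) - q k - u k)) :
    Filter.limsup (fun k => ‖q k - qstar‖) Filter.atTop ≤ B / (1 - γ) := by
  have h1γ : (0:ℝ) < 1 - γ := by linarith
  set C : ℝ := B / (1 - γ) with hCdef
  set e : ℕ → ℝ := fun k => ‖q k - qstar‖ with he
  set a : ℕ → ℝ := fun k => η k * (1 - γ) with ha
  have ha0 : ∀ k, 0 ≤ a k := fun k => mul_nonneg (hη k).1 h1γ.le
  have haC : ∀ k, a k * C = η k * B := by
    intro k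
    simp only [ha, hCdef]
    field_simp
  -- key recurrence
  have key : ∀ k, e (k+1) - C ≤ (1 - a k) * (e k - C) := by
    intro k
    have hid : q (k+1) - qstar
        = (1 - η k) • (q k - qstar) + η k • (T (q k) - T qstar) - η k • u k := by
      rw [hrec k, hfix]
      module
    have hb : e (k+1) ≤ (1 - η k) * e k + η k * (γ * e k) + η k * B := by
      show ‖q (k+1) - qstar‖ ≤ _
      rw [hid]
      calc ‖(1 - η k) • (q k - qstar) + η k • (T (q k) - T qstar) - η k • u k‖
          ≤ ‖(1 - η k) • (q k - qstar) + η k • (T (q k) - T qstar)‖ + ‖η k • u k‖ :=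
            norm_sub_le _ _
        _ ≤ ‖(1 - η k) • (q k - qstar)‖ + ‖η k • (T (q k) - T qstar)‖ + ‖η k • u k‖ := by
            gcongr
            exact norm_add_le _ _
        _ ≤ (1 - η k) * e k + η k * (γ * e k) + η k * B := by
            rw [norm_smul, norm_smul, norm_smul]
            rw [Real.norm_eq_abs, Real.norm_eq_abs,
              abs_of_nonneg (by linarith [(hη k).2] : (0:ℝ) ≤ 1 - η k),
              abs_of_nonneg (hη k).1]
            gcongr
            · exact (hη k).1
            · exact hcontr _ _
            · exact (hη k).1
            · exact hu k
    have h2 : (1 - η k) * e k + η k * (γ * e k) = (1 - a k) * e k := by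
      simp only [ha]; ring
    have h3 : η k * B = a k * C := (haC k).symm
    have h4 : (1 - a k) * (e k - C) = (1 - a k) * e k + a k * C - C := by ring
    linarith [hb, h2, h3, h4]
  -- positive part
  set f : ℕ → ℝ := fun k => max (e k - C) 0 with hf
  have hf0 : ∀ k, 0 ≤ f k := fun k => le_max_right _ _
  have hfrec : ∀ k, f (k+1) ≤ (1 - a k) * f k := by
    intro k
    have h1a : 0 ≤ 1 - a k := by
      have : a k ≤ 1 := by
        have := (hη k).2
        have := (hη k).1
        simp only [ha]
        nlinarith
      linarith
    apply max_le
    · calc e (k+1) - C ≤ (1 - a k) * (e k - C) := key k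
        _ ≤ (1 - a k) * f k := by
            exact mul_le_mul_of_nonneg_left (le_max_left _ _) h1a
    · exact mul_nonneg h1a (hf0 k)
  set S : ℕ → ℝ := fun k => ∑ j ∈ Finset.range k, a j with hS
  have hbound : ∀ k, f k ≤ f 0 * Real.exp (-(S k)) := by
    intro k
    induction k with
    | zero => simp [hS]
    | succ k ih =>
        calc f (k+1) ≤ (1 - a k) * f k := hfrec k
          _ ≤ Real.exp (-(a k)) * f k := by
              apply mul_le_mul_of_nonneg_right _ (hf0 k)
              linarith [Real.add_one_le_exp (-(a k))]
          _ ≤ Real.exp (-(a k)) * (f 0 * Real.exp (-(S k))) := by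
              exact mul_le_mul_of_nonneg_left ih (Real.exp_pos _).le
          _ = f 0 * Real.exp (-(S (k+1))) := by
              simp only [hS, Finset.sum_range_succ, neg_add, Real.exp_add]
              ring
  have hStop : Filter.Tendsto S Filter.atTop Filter.atTop := by
    have : S = fun k => (1 - γ) * ∑ j ∈ Finset.range k, η j := by
      funext k
      simp only [hS, ha, Finset.mul_sum]
      exact Finset.sum_congr rfl (fun j _ => by ring)
    rw [this]
    exact hdiv.const_mul_atTop h1γ
  have hftend : Filter.Tendsto f Filter.atTop (nhds 0) := by
    apply squeeze_zero hf0 hbound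
    have : Filter.Tendsto (fun k => Real.exp (-(S k))) Filter.atTop (nhds 0) :=
      Real.tendsto_exp_atBot.comp (Filter.tendsto_neg_atBot_iff.mpr hStop)
    simpa using this.const_mul (f 0)
  have hgtend : Filter.Tendsto (fun k => C + f k) Filter.atTop (nhds C) := by
    simpa using tendsto_const_nhds.add hftend
  have hle : ∀ k, e k ≤ C + f k := by
    intro k
    have := le_max_left (e k - C) 0
    linarith [this]
  calc Filter.limsup e Filter.atTop
      ≤ Filter.limsup (fun k => C + f k) Filter.atTop := by
        refine Filter.limsup_le_limsup (Filter.Eventually.of_forall hle) ?_ ?_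
        · exact Filter.isCoboundedUnder_le_of_le Filter.atTop (fun k => norm_nonneg _)
        · exact hgtend.isBoundedUnder_le
    _ = C := hgtend.limsup_eq
end

section
/- Let δ_{k+1} = (1 - η_k) δ_k + η_k (F_k - λ u_k) in a normed space, where 0 ≤ η_k ≤ 1, ∑ η_k = ∞, ‖u_k‖ ≤ G, λ ≥ 0, and F_k → 0. Then limsup ‖δ_k‖ ≤ λ G. -/
theorem stmt_16 {E : Type*} [NormedAddCommGroup E] [NormedSpace ℝ E]
    (η : ℕ → ℝ) (hη : ∀ k, 0 ≤ η k ∧ η k ≤ 1)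
    (hdiv : Filter.Tendsto (fun n => ∑ k ∈ Finset.range n, η k) Filter.atTop Filter.atTop)
    (u : ℕ → E) (G : ℝ) (hu : ∀ k, ‖u k‖ ≤ G)
    (lam : ℝ) (hlam : 0 ≤ lam)
    (F : ℕ → E) (hF : Filter.Tendsto F Filter.atTop (nhds 0))
    (δ : ℕ → E)
    (hrec : ∀ k, δ (k + 1) = (1 - η k) • δ k + η k • (F k - lam • u k)) :
    Filter.limsup (fun k => ‖δ k‖) Filter.atTop ≤ lam * G := by
  have hG : 0 ≤ G := le_trans (norm_nonneg _) (hu 0)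
  have hstep : ∀ k, ‖δ (k+1)‖ ≤ (1 - η k) * ‖δ k‖ + η k * (‖F k‖ + lam * G) := by
    intro k
    rw [hrec k]
    calc ‖(1 - η k) • δ k + η k • (F k - lam • u k)‖
        ≤ ‖(1 - η k) • δ k‖ + ‖η k • (F k - lam • u k)‖ := norm_add_le _ _
      _ ≤ (1 - η k) * ‖δ k‖ + η k * (‖F k‖ + lam * G) := by
          rw [norm_smul, norm_smul, Real.norm_eq_abs, Real.norm_eq_abs,
            abs_of_nonneg (by linarith [(hη k).2]), abs_of_nonneg (hη k).1]
          have hb : ‖F k - lam • u k‖ ≤ ‖F k‖ + lam * G := by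
            refine (norm_sub_le _ _).trans ?_
            rw [norm_smul, Real.norm_eq_abs, abs_of_nonneg hlam]
            have := hu k
            nlinarith
          exact add_le_add_right (mul_le_mul_of_nonneg_left hb (hη k).1) _
  -- key eventual bound
  have key : ∀ ε : ℝ, 0 < ε → ∀ᶠ k in Filter.atTop, ‖δ k‖ ≤ lam * G + ε := by
    intro ε hε
    obtain ⟨N, hN⟩ := Metric.tendsto_atTop.mp hF (ε/2) (by linarith)
    have hFN : ∀ k ≥ N, ‖F k‖ ≤ ε/2 := by
      intro k hk
      have := hN k hk
      rw [dist_zero_right] at this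
      linarith
    set M : ℝ := lam * G + ε/2 with hM
    set c : ℕ → ℝ := fun k => max (‖δ k‖ - M) 0 with hc
    have hcn : ∀ k, 0 ≤ c k := fun k => le_max_right _ _
    have hcrec : ∀ k ≥ N, c (k+1) ≤ (1 - η k) * c k := by
      intro k hk
      apply max_le
      · have h1 := hstep k
        have h2 := hFN k hk
        have h3 : ‖δ k‖ - M ≤ c k := le_max_left _ _
        have h4 : (1 - η k) * (‖δ k‖ - M) ≤ (1 - η k) * c k :=
          mul_le_mul_of_nonneg_left h3 (by linarith [(hη k).2])
        have h5 : η k * (‖F k‖ + lam * G) ≤ η k * M :=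
          mul_le_mul_of_nonneg_left (by rw [hM]; linarith) (hη k).1
        have h6 : (1 - η k) * ‖δ k‖ + η k * M - M = (1 - η k) * (‖δ k‖ - M) := by ring
        linarith
      · exact mul_nonneg (by linarith [(hη k).2]) (hcn k)
    have hiter : ∀ m, c (N + m) ≤ c N * ∏ j ∈ Finset.range m, (1 - η (N + j)) := by
      intro m
      induction m with
      | zero => simp
      | succ m ih =>
        have hpn : 0 ≤ ∏ j ∈ Finset.range m, (1 - η (N + j)) :=
          Finset.prod_nonneg (fun j _ => by linarith [(hη (N + j)).2])
        have h1 := hcrec (N + m) (Nat.le_add_right _ _)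
        have h2 : (1 - η (N + m)) * c (N + m) ≤
            (1 - η (N + m)) * (c N * ∏ j ∈ Finset.range m, (1 - η (N + j))) := by
          apply mul_le_mul_of_nonneg_left ih (by linarith [(hη (N + m)).2])
        rw [Finset.prod_range_succ]
        calc c (N + (m + 1)) = c (N + m + 1) := by ring_nf
          _ ≤ _ := le_trans h1 h2
          _ = c N * ((∏ j ∈ Finset.range m, (1 - η (N + j))) * (1 - η (N + m))) := by ring
    -- product tends to 0
    have hsum : Filter.Tendsto (fun m => ∑ j ∈ Finset.range m, η (N + j))
        Filter.atTop Filter.atTop := by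
      have h1 : Filter.Tendsto (fun m => ∑ k ∈ Finset.range (N + m), η k)
          Filter.atTop Filter.atTop := by
        have : Filter.Tendsto (fun m => N + m) Filter.atTop Filter.atTop :=
          Filter.tendsto_atTop_mono (fun m => Nat.le_add_left m N) Filter.tendsto_id
        exact hdiv.comp this
      have h2 : ∀ m, ∑ j ∈ Finset.range m, η (N + j)
          = (∑ k ∈ Finset.range (N + m), η k) + (-(∑ k ∈ Finset.range N, η k)) := by
        intro m
        rw [Finset.sum_range_add]
        ring
      simp only [h2]
      exact Filter.tendsto_atTop_add_const_right _ _ h1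
    have hprod : Filter.Tendsto (fun m => c N * ∏ j ∈ Finset.range m, (1 - η (N + j)))
        Filter.atTop (nhds 0) := by
      have hP0 : Filter.Tendsto (fun m => ∏ j ∈ Finset.range m, (1 - η (N + j)))
          Filter.atTop (nhds 0) := by
        have hub : ∀ m, ∏ j ∈ Finset.range m, (1 - η (N + j))
            ≤ Real.exp (-(∑ j ∈ Finset.range m, η (N + j))) := by
          intro m
          calc ∏ j ∈ Finset.range m, (1 - η (N + j))
              ≤ ∏ j ∈ Finset.range m, Real.exp (-(η (N + j))) :=
                Finset.prod_le_prod (fun j _ => by linarith [(hη (N + j)).2])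
                  (fun j _ => by linarith [Real.add_one_le_exp (-(η (N + j)))])
            _ = Real.exp (-(∑ j ∈ Finset.range m, η (N + j))) := by
                rw [← Real.exp_sum]
                congr 1
                simp
        have hlb : ∀ m, 0 ≤ ∏ j ∈ Finset.range m, (1 - η (N + j)) :=
          fun m => Finset.prod_nonneg (fun j _ => by linarith [(hη (N + j)).2])
        have hexp : Filter.Tendsto (fun m => Real.exp (-(∑ j ∈ Finset.range m, η (N + j))))
            Filter.atTop (nhds 0) :=
          Real.tendsto_exp_atBot.comp (Filter.tendsto_neg_atBot_iff.mpr hsum)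
        exact squeeze_zero hlb hub hexp
      have := hP0.const_mul (c N)
      simpa using this
    have hev : ∀ᶠ m in Filter.atTop,
        c N * ∏ j ∈ Finset.range m, (1 - η (N + j)) < ε/2 :=
      hprod.eventually_lt_const (by linarith)
    obtain ⟨m0, hm0⟩ := Filter.eventually_atTop.mp hev
    rw [Filter.eventually_atTop]
    refine ⟨N + m0, fun k hk => ?_⟩
    obtain ⟨m, rfl⟩ : ∃ m, k = N + m := ⟨k - N, by omega⟩
    have hm : m0 ≤ m := by omega
    have h1 := hiter m
    have h2 := hm0 m hm
    have h3 : ‖δ (N + m)‖ - M ≤ c (N + m) := le_max_left _ _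
    have : c (N + m) < ε / 2 := lt_of_le_of_lt h1 h2
    simp only [hM] at h3 ⊢
    linarith
  refine le_of_forall_pos_le_add (fun ε hε => ?_)
  have hev := key ε hε
  exact Filter.limsup_le_of_le
    (Filter.isCoboundedUnder_le_of_le _ (fun k => norm_nonneg (δ k))) hev
end
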